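/- Suppose (A,B) ∈ M_{n×n}(ℂ) × M_{n×m}(ℂ) is not controllable, so there is a proper A-invariant subspace W of dimension r < n containing Im B. In a basis adapted to W, A has block upper-triangular form with blocks A₁₁ (r×r), A₁₂, 0, A₂₂ and B = (B₁; 0). For the one-parameter subgroup λ(ζ) = diag(1,...,1, ζ⁻¹,...,ζ⁻¹) (with r ones), the limit lim_{ζ→0} λ(ζ)·(A,B) = lim_{ζ→0} (λ(ζ)Aλ(ζ)⁻¹, λ(ζ)B) exists, and the Hilbert–Mumford pairing ⟨det, λ⟩ = −(n − r) is negative. -/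

import Mathlib

open Matrix Filter

/-- for a non-controllable pair `(A,B)` in block form adapted to a proper
`A`-invariant subspace `W` of dimension `r` containing `Im B`, and the 1-PS
`λ(ζ) = diag(1,...,1,ζ⁻¹,...,ζ⁻¹)` (with `r` ones), the limit
`lim_{ζ→0} (λ(ζ) A λ(ζ)⁻¹, λ(ζ) B)` exists, and the Hilbert–Mumford pairing
`⟨det, λ⟩ = −(n − r)` is negative. -/
theorem stmt7 (n m r : ℕ) (hr : r < n)
    (A : Matrix (Fin n) (Fin n) ℂ) (B : Matrix (Fin n) (Fin m) ℂ)
    (hA : ∀ i j : Fin n, r ≤ (i : ℕ) → (j : ℕ) < r → A i j = 0)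
    (hB : ∀ (i : Fin n) (u : Fin m), r ≤ (i : ℕ) → B i u = 0) :
    (∃ (A' : Matrix (Fin n) (Fin n) ℂ) (B' : Matrix (Fin n) (Fin m) ℂ),
      Tendsto
        (fun ζ : ℂ =>
          (Matrix.diagonal (fun i : Fin n => if (i : ℕ) < r then (1 : ℂ) else ζ⁻¹) * A *
              Matrix.diagonal (fun i : Fin n => if (i : ℕ) < r then (1 : ℂ) else ζ),
           Matrix.diagonal (fun i : Fin n => if (i : ℕ) < r then (1 : ℂ) else ζ⁻¹) * B))
        (nhdsWithin 0 {0}ᶜ) (nhds (A', B'))) ∧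
    (∑ i : Fin n, (if (i : ℕ) < r then (0 : ℤ) else -1)) = -((n : ℤ) - r) ∧
    -((n : ℤ) - r) < 0 := by
  refine ⟨⟨fun i j => if (i : ℕ) < r ∧ ¬ ((j : ℕ) < r) then 0 else A i j, B, ?_⟩, ?_, ?_⟩
  · refine Tendsto.prodMk_nhds ?_ ?_
    · refine tendsto_pi_nhds.mpr ?_
      intro i
      rw [tendsto_pi_nhds]
      intro j
      have hentry : ∀ ζ : ℂ,
          (Matrix.diagonal (fun i : Fin n => if (i : ℕ) < r then (1 : ℂ) else ζ⁻¹) * A *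
            Matrix.diagonal (fun i : Fin n => if (i : ℕ) < r then (1 : ℂ) else ζ)) i j
          = (if (i : ℕ) < r then (1 : ℂ) else ζ⁻¹) * A i j *
              (if (j : ℕ) < r then (1 : ℂ) else ζ) := by
        intro ζ
        rw [Matrix.mul_diagonal, Matrix.diagonal_mul]
      simp only [hentry]
      by_cases hi : (i : ℕ) < r
      · by_cases hj : (j : ℕ) < r
        · simp only [hi, hj, if_true, one_mul, mul_one, not_true_eq_false, and_false, if_false]
          exact tendsto_const_nhds
        · simp only [hi, hj, if_true, if_false, one_mul, not_false_eq_true, and_true,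
            true_and]
          have h : Tendsto (fun ζ : ℂ => A i j * ζ) (nhds 0) (nhds 0) := by
            have h2 : Continuous (fun ζ : ℂ => A i j * ζ) := continuous_const.mul continuous_id
            simpa using h2.tendsto 0
          exact h.mono_left nhdsWithin_le_nhds
      · by_cases hj : (j : ℕ) < r
        · have hz : A i j = 0 := hA i j (not_lt.mp hi) hj
          simp only [hi, hj, hz, if_true, if_false, mul_zero, zero_mul, and_false,
            false_and, mul_one]
          exact tendsto_const_nhds
        · simp only [hi, hj, if_false, false_and, if_false]
          refine Tendsto.congr' ?_ (tendsto_const_nhds (x := A i j))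
          filter_upwards [self_mem_nhdsWithin] with ζ hζ
          have hζ0 : ζ ≠ 0 := hζ
          field_simp
    · refine tendsto_pi_nhds.mpr ?_
      intro i
      rw [tendsto_pi_nhds]
      intro u
      have hentry : ∀ ζ : ℂ,
          (Matrix.diagonal (fun i : Fin n => if (i : ℕ) < r then (1 : ℂ) else ζ⁻¹) * B) i u
          = (if (i : ℕ) < r then (1 : ℂ) else ζ⁻¹) * B i u := by
        intro ζ; rw [Matrix.diagonal_mul]
      simp only [hentry]
      by_cases hi : (i : ℕ) < r
      · simp only [hi, if_true, one_mul]; exact tendsto_const_nhds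
      · have hz : B i u = 0 := hB i u (not_lt.mp hi)
        simp only [hi, if_false, hz, mul_zero]
        exact tendsto_const_nhds
  · have : ∑ i : Fin n, (if (i : ℕ) < r then (0 : ℤ) else -1)
        = -(((Finset.univ.filter fun i : Fin n => ¬ ((i : ℕ) < r)).card : ℤ)) := by
      rw [Finset.sum_ite, Finset.sum_const, Finset.sum_const]
      simp
    rw [this]
    have hcard : (Finset.univ.filter fun i : Fin n => ¬ ((i : ℕ) < r)).card = n - r := by
      have h1 : (Finset.univ.filter fun i : Fin n => (i : ℕ) < r).card = r := by
        have he : (Finset.univ.filter fun i : Fin n => (i : ℕ) < r) = Finset.Iio ⟨r, hr⟩ := by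
          ext i; simp [Fin.lt_def]
        rw [he, Fin.card_Iio]
      rw [Finset.filter_not, Finset.card_sdiff_of_subset (Finset.filter_subset _ _),
        Finset.card_univ, Fintype.card_fin, h1]
    rw [hcard]
    omega
  · omega
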